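/- Let A be an abelian group in which every element has order dividing 2, let k be a field with char(k) ≠ 2, and let ρ : ℤ[1/2][A] → k[A] be the map on group rings induced by the canonical ring homomorphism ℤ[1/2] → k. If p ∈ ℤ[1/2][A] satisfies p² = p and p ≠ 0, then ρ(p) ≠ 0. -/

import Mathlib

/-- `ℤ[1/2]`: the subring of `ℚ` of rationals whose denominator is a power of `2`. -/
def Zhalf : Subring ℚ where
  carrier := {q : ℚ | ∃ (m : ℤ) (n : ℕ), q = (m : ℚ) / 2 ^ n}
  zero_mem' := ⟨0, 0, by norm_num⟩
  one_mem' := ⟨1, 0, by norm_num⟩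
  add_mem' := by
    rintro a b ⟨m, n, rfl⟩ ⟨m', n', rfl⟩
    exact ⟨m * 2 ^ n' + m' * 2 ^ n, n + n', by push_cast [pow_add]; field_simp⟩
  mul_mem' := by
    rintro a b ⟨m, n, rfl⟩ ⟨m', n', rfl⟩
    exact ⟨m * m', n + n', by push_cast [pow_add]; field_simp⟩
  neg_mem' := by
    rintro a ⟨m, n, rfl⟩
    exact ⟨-m, n, by push_cast; ring⟩

/-- `o(p)`: the multiplicative order of `2` modulo `p`. -/
noncomputable def oOrd (p : ℕ) : ℕ := orderOf (2 : ZMod p)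

/-- `L(p)`: the set of `x` with `2 ≤ x ≤ p+1` congruent mod `p` to a power of `2`. -/
noncomputable def Lset (p : ℕ) : Finset ℕ :=
  letI : DecidablePred fun x : ℕ => ∃ i : ℕ, (2 : ZMod p) ^ i = (x : ZMod p) :=
    fun _ => Classical.propDecidable _
  (Finset.Icc 2 (p + 1)).filter fun x => ∃ i : ℕ, (2 : ZMod p) ^ i = (x : ZMod p)

/-- `r(p,x)`: the least natural number `r` with `2^r ≡ x (mod p)`. -/
noncomputable def rpx (p x : ℕ) : ℕ := sInf {r : ℕ | (2 : ZMod p) ^ r = (x : ZMod p)}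

/-- The value `F(p)` from the paper. -/
noncomputable def Fval (p : ℕ) : ℝ :=
  47 / 64 + (1 / 128) * (1 / (2 ^ oOrd p - 1)) +
    (1 / 64) * (2 ^ p / (2 ^ p - 1)) * ((2 : ℝ) ^ oOrd p / (2 ^ oOrd p - 1)) *
      ∑ x ∈ Lset p, (1 : ℝ) / 2 ^ (x + rpx p x)

/-- STATEMENT 13: for an abelian group `A` of exponent dividing 2 and a field `k` with
`char k ≠ 2`, the coefficient-reduction `ρ : ℤ[1/2][A] → k[A]` (induced by the canonical —
hence arbitrary — ring homomorphism `c : ℤ[1/2] → k`) sends nonzero idempotents to nonzero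
elements. -/
theorem statement13 (A : Type) [CommGroup A] (hA : ∀ a : A, a ^ 2 = 1)
    (k : Type) [Field k] (hchar : ringChar k ≠ 2) (c : Zhalf →+* k)
    (p : MonoidAlgebra Zhalf A) (hp : p * p = p) (hp0 : p ≠ 0) :
    (MonoidAlgebra.ofCoeff (Finsupp.mapRange ⇑c (map_zero c) p.coeff) : MonoidAlgebra k A) ≠ 0 := by
  intro h
  have hc : ∀ a : A, c (p.coeff a) = 0 := by
    intro a
    have := DFunLike.congr_fun (congrArg MonoidAlgebra.coeff h) a
    simpa [Finsupp.mapRange_apply, MonoidAlgebra.coeff_ofCoeff] using this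
  obtain ⟨a0, ha0⟩ : ∃ a, p.coeff a ≠ 0 := by
    obtain ⟨a, ha⟩ := Finsupp.ne_iff.mp (mt MonoidAlgebra.coeff_eq_zero.mp hp0)
    exact ⟨a, by simpa using ha⟩
  set q := ringChar k with hq
  by_cases hq0 : q = 0
  · haveI : CharP k 0 := hq0 ▸ ringChar.charP k
    haveI : CharZero k := CharP.charP_to_charZero k
    apply ha0
    obtain ⟨m, n, hx⟩ := (p.coeff a0).2
    have h2q : ((2:Zhalf):ℚ) = 2 := rfl
    have h1 : (p.coeff a0) * (2:Zhalf)^n = (m : Zhalf) := by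
      apply Subtype.ext
      push_cast [h2q]
      rw [hx]; field_simp
    have h2 : (m : k) = 0 := by
      have := congrArg c h1
      rw [map_mul, hc, zero_mul, map_intCast] at this
      exact this.symm
    have hm : m = 0 := by exact_mod_cast h2
    apply Subtype.ext
    rw [hx, hm]; simp
  · haveI : CharP k q := ringChar.charP k
    have hqprime : q.Prime := CharP.char_prime_of_ne_zero k hq0
    have lemA : ∀ x : Zhalf, c x = 0 → ((q : ℤ) : Zhalf) ∣ x := by
      intro x hx0
      obtain ⟨m, n, hx⟩ := x.2
      have h2q : ((2:Zhalf):ℚ) = 2 := rfl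
      have h1 : x * (2:Zhalf)^n = (m : Zhalf) := by
        apply Subtype.ext; push_cast [h2q]; rw [hx]; field_simp
      have h2 : (m : k) = 0 := by
        have := congrArg c h1
        rw [map_mul, hx0, zero_mul, map_intCast] at this
        exact this.symm
      obtain ⟨m', hm'⟩ := (CharP.intCast_eq_zero_iff k q m).mp h2
      refine ⟨⟨(m':ℚ)/2^n, m', n, rfl⟩, ?_⟩
      apply Subtype.ext
      push_cast
      rw [hx, hm']
      push_cast
      ring
    have lemB : ∀ N : ℕ, ∀ a : A, ((q : ℤ) : Zhalf)^N ∣ p.coeff a := by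
      intro N
      induction N with
      | zero => intro a; simp
      | succ n ih =>
        intro a
        classical
        rw [← hp, MonoidAlgebra.coeff_mul]
        apply Finset.dvd_sum
        intro a1 _
        apply Finset.dvd_sum
        intro a2 _
        rw [pow_succ]
        by_cases hcase : a1 * a2 = a
        · simpa [hcase] using mul_dvd_mul (ih a1) (lemA _ (hc a2))
        · simp [hcase]
    obtain ⟨m0, e0, hx0⟩ := (p.coeff a0).2
    have hm0 : m0 ≠ 0 := by
      intro hh
      apply ha0; apply Subtype.ext; rw [hx0, hh]; simp
    obtain ⟨N, hN⟩ := pow_unbounded_of_one_lt (m0.natAbs) hqprime.one_lt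
    obtain ⟨y, hy⟩ := lemB N a0
    obtain ⟨m, e, hye⟩ := y.2
    have heq : (m0 : ℚ) / 2 ^ e0 = (q : ℚ) ^ N * ((m : ℚ) / 2 ^ e) := by
      have := congrArg (Subtype.val) hy
      push_cast at this
      rw [hx0, hye] at this
      exact_mod_cast this
    have heqZ : m0 * 2 ^ e = (q : ℤ) ^ N * m * 2 ^ e0 := by
      have h2e0 : ((2:ℚ) ^ e0) ≠ 0 := by positivity
      have h2e : ((2:ℚ) ^ e) ≠ 0 := by positivity
      field_simp at heq
      have h' : ((m0 * 2 ^ e : ℤ) : ℚ) = (((q : ℤ) ^ N * m * 2 ^ e0 : ℤ) : ℚ) := by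
        push_cast; linear_combination heq
      exact_mod_cast h'
    have hdvd : (q : ℤ) ^ N ∣ m0 * 2 ^ e := ⟨m * 2 ^ e0, by linarith [heqZ]⟩
    have hcop : IsCoprime ((q:ℤ) ^ N) ((2:ℤ) ^ e) := by
      apply IsCoprime.pow
      rw [Int.isCoprime_iff_gcd_eq_one]
      have : Nat.Coprime q 2 := (Nat.coprime_primes hqprime Nat.prime_two).mpr hchar
      simpa [Int.gcd] using this
    have hdvd2 : (q : ℤ) ^ N ∣ m0 := hcop.dvd_of_dvd_mul_right hdvd
    have : q ^ N ∣ m0.natAbs := by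
      have h3 : ((q:ℤ)) ^ N ∣ (m0.natAbs : ℤ) := Int.dvd_natAbs.mpr hdvd2
      exact_mod_cast h3
    have := Nat.le_of_dvd (Int.natAbs_pos.mpr hm0) this
    omega
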